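/- There exists a sequence of finite simple graphs (G_n) such that the ratio scc'(G_n)/scc(G_n) tends to infinity as n tends to infinity. -/

import Mathlib

open Finset

/-- A clique covering of `G`: a finite family of cliques covering every edge. -/
def IsCliqueCover {V : Type*} (G : SimpleGraph V) (𝒞 : Finset (Finset V)) : Prop :=
  (∀ C ∈ 𝒞, G.IsClique (C : Set V)) ∧
  ∀ u v, G.Adj u v → ∃ C ∈ 𝒞, u ∈ C ∧ v ∈ C

/-- A clique partition of `G`: every edge lies in exactly one clique of the family. -/
def IsCliquePartition {V : Type*} (G : SimpleGraph V) (𝒞 : Finset (Finset V)) : Prop :=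
  (∀ C ∈ 𝒞, G.IsClique (C : Set V)) ∧
  ∀ u v, G.Adj u v → ∃! C, C ∈ 𝒞 ∧ u ∈ C ∧ v ∈ C

/-- The sigma clique cover number: minimum total size of cliques in a clique covering. -/
noncomputable def scc {V : Type*} (G : SimpleGraph V) : ℕ :=
  sInf {k | ∃ 𝒞, IsCliqueCover G 𝒞 ∧ ∑ C ∈ 𝒞, C.card = k}

/-- The sigma clique partition number: minimum total size of cliques in a clique partition. -/
noncomputable def scp {V : Type*} (G : SimpleGraph V) : ℕ :=
  sInf {k | ∃ 𝒞, IsCliquePartition G 𝒞 ∧ ∑ C ∈ 𝒞, C.card = k}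

/-- The clique cover number: minimum number of cliques in a clique covering. -/
noncomputable def cc {V : Type*} (G : SimpleGraph V) : ℕ :=
  sInf {k | ∃ 𝒞, IsCliqueCover G 𝒞 ∧ 𝒞.card = k}

/-- The clique partition number: minimum number of cliques in a clique partition. -/
noncomputable def cp {V : Type*} (G : SimpleGraph V) : ℕ :=
  sInf {k | ∃ 𝒞, IsCliquePartition G 𝒞 ∧ 𝒞.card = k}

/-- `scc'`: the minimum total size of cliques over clique coverings achieving `cc G`. -/
noncomputable def scc' {V : Type*} (G : SimpleGraph V) : ℕ :=
  sInf {k | ∃ 𝒞, IsCliqueCover G 𝒞 ∧ 𝒞.card = cc G ∧ ∑ C ∈ 𝒞, C.card = k}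


open Finset

section Construction

inductive Vtx (m : ℕ) : Type
  | x : Fin m → Vtx m
  | a : Fin m → Vtx m
  | b : Fin m → Vtx m
  | wA : Vtx m
  | wB : Vtx m
  deriving DecidableEq, Fintype

namespace Vtx

variable {m : ℕ}

def vrel (m : ℕ) : Vtx m → Vtx m → Prop
  | x i, x j => i ≠ j
  | a i, a j => i ≠ j
  | b i, b j => i ≠ j
  | x _, a _ => True
  | a _, x _ => True
  | x _, b _ => True
  | b _, x _ => True
  | a i, b j => i = j
  | b i, a j => i = j
  | a _, wA => True
  | wA, a _ => True
  | b _, wB => True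
  | wB, b _ => True
  | _, _ => False

def Gr (m : ℕ) : SimpleGraph (Vtx m) where
  Adj := vrel m
  symm := ⟨by intro u v h; cases u <;> cases v <;> simp_all [vrel, eq_comm]⟩
  loopless := ⟨by intro v; cases v <;> simp [vrel]⟩

lemma gr_adj (u v : Vtx m) : (Gr m).Adj u v ↔ vrel m u v := Iff.rfl

/-- the core -/
def XS (m : ℕ) : Finset (Vtx m) := univ.image x
def AS (m : ℕ) : Finset (Vtx m) := univ.image a
def BS (m : ℕ) : Finset (Vtx m) := univ.image b

@[simp] lemma mem_XS {v : Vtx m} : v ∈ XS m ↔ ∃ i, x i = v := by simp [XS]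
@[simp] lemma mem_AS {v : Vtx m} : v ∈ AS m ↔ ∃ i, a i = v := by simp [AS]
@[simp] lemma mem_BS {v : Vtx m} : v ∈ BS m ↔ ∃ i, b i = v := by simp [BS]

lemma card_XS : (XS m).card = m := by
  rw [XS, card_image_of_injective _ (fun i j h => by cases h; rfl)]
  simp

lemma card_AS : (AS m).card = m := by
  rw [AS, card_image_of_injective _ (fun i j h => by cases h; rfl)]
  simp

lemma card_BS : (BS m).card = m := by
  rw [BS, card_image_of_injective _ (fun i j h => by cases h; rfl)]
  simp

/-- members of the cheap cover -/
def CA (m : ℕ) : Finset (Vtx m) := XS m ∪ AS m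
def CB (m : ℕ) : Finset (Vtx m) := XS m ∪ BS m
def EA (m : ℕ) : Finset (Vtx m) := insert wA (AS m)
def EB (m : ℕ) : Finset (Vtx m) := insert wB (BS m)
def Dp (m : ℕ) (i : Fin m) : Finset (Vtx m) := {a i, b i}
/-- members of the tight cover -/
def Mc (m : ℕ) (i : Fin m) : Finset (Vtx m) := insert (a i) (insert (b i) (XS m))

lemma isClique_CA : (Gr m).IsClique (CA m) := by
  intro u hu v hv hne
  simp only [CA, coe_union, Set.mem_union, mem_coe, mem_XS, mem_AS] at hu hv
  obtain (⟨i, rfl⟩|⟨i, rfl⟩) := hu <;> obtain (⟨j, rfl⟩|⟨j, rfl⟩) := hv <;>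
    simp_all [gr_adj, vrel]

lemma isClique_CB : (Gr m).IsClique (CB m) := by
  intro u hu v hv hne
  simp only [CB, coe_union, Set.mem_union, mem_coe, mem_XS, mem_BS] at hu hv
  obtain (⟨i, rfl⟩|⟨i, rfl⟩) := hu <;> obtain (⟨j, rfl⟩|⟨j, rfl⟩) := hv <;>
    simp_all [gr_adj, vrel]

lemma isClique_EA : (Gr m).IsClique (EA m) := by
  intro u hu v hv hne
  simp only [EA, coe_insert, Set.mem_insert_iff, mem_coe, mem_AS] at hu hv
  obtain (rfl|⟨i, rfl⟩) := hu <;> obtain (rfl|⟨j, rfl⟩) := hv <;>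
    simp_all [gr_adj, vrel]

lemma isClique_EB : (Gr m).IsClique (EB m) := by
  intro u hu v hv hne
  simp only [EB, coe_insert, Set.mem_insert_iff, mem_coe, mem_BS] at hu hv
  obtain (rfl|⟨i, rfl⟩) := hu <;> obtain (rfl|⟨j, rfl⟩) := hv <;>
    simp_all [gr_adj, vrel]

lemma isClique_Dp (i : Fin m) : (Gr m).IsClique (Dp m i) := by
  intro u hu v hv hne
  simp only [Dp, coe_insert, Set.mem_insert_iff, coe_singleton, Set.mem_singleton_iff] at hu hv
  obtain (rfl|rfl) := hu <;> obtain (rfl|rfl) := hv <;> simp_all [gr_adj, vrel]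

lemma isClique_Mc (i : Fin m) : (Gr m).IsClique (Mc m i) := by
  intro u hu v hv hne
  simp only [Mc, coe_insert, Set.mem_insert_iff, mem_coe, mem_XS] at hu hv
  obtain (rfl|rfl|⟨j, rfl⟩) := hu <;> obtain (rfl|rfl|⟨k, rfl⟩) := hv <;>
    simp_all [gr_adj, vrel]

end Vtx
end Construction

section Part2
namespace Vtx
variable {m : ℕ}

/-- The cheap cover. -/
def Dcov (m : ℕ) : Finset (Finset (Vtx m)) :=
  insert (CA m) (insert (CB m) (insert (EA m) (insert (EB m) (univ.image (Dp m)))))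

/-- The tight cover (cardinality m+2). -/
def Tcov (m : ℕ) : Finset (Finset (Vtx m)) :=
  insert (EA m) (insert (EB m) (univ.image (Mc m)))

lemma Dcov_cliques : ∀ C ∈ Dcov m, (Gr m).IsClique (C : Set (Vtx m)) := by
  intro C hC
  simp only [Dcov, mem_insert, mem_image, mem_univ, true_and] at hC
  obtain (rfl|rfl|rfl|rfl|⟨i, rfl⟩) := hC
  · exact isClique_CA
  · exact isClique_CB
  · exact isClique_EA
  · exact isClique_EB
  · exact isClique_Dp i

lemma mem_Dcov_CA : CA m ∈ Dcov m := by simp [Dcov]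
lemma mem_Dcov_CB : CB m ∈ Dcov m := by simp [Dcov]
lemma mem_Dcov_EA : EA m ∈ Dcov m := by simp [Dcov]
lemma mem_Dcov_EB : EB m ∈ Dcov m := by simp [Dcov]
lemma mem_Dcov_Dp (i : Fin m) : Dp m i ∈ Dcov m := by
  simp only [Dcov, mem_insert, mem_image, mem_univ, true_and]
  right; right; right; right; exact ⟨i, rfl⟩

lemma Dcov_covers : ∀ u v : Vtx m, (Gr m).Adj u v → ∃ C ∈ Dcov m, u ∈ C ∧ v ∈ C := by
  intro u v huv
  rw [gr_adj] at huv
  cases u with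
  | x i =>
    cases v with
    | x j => exact ⟨CA m, mem_Dcov_CA, by simp [CA], by simp [CA]⟩
    | a j => exact ⟨CA m, mem_Dcov_CA, by simp [CA], by simp [CA]⟩
    | b j => exact ⟨CB m, mem_Dcov_CB, by simp [CB], by simp [CB]⟩
    | wA => simp [vrel] at huv
    | wB => simp [vrel] at huv
  | a i =>
    cases v with
    | x j => exact ⟨CA m, mem_Dcov_CA, by simp [CA], by simp [CA]⟩
    | a j => exact ⟨CA m, mem_Dcov_CA, by simp [CA], by simp [CA]⟩
    | b j =>
      have : i = j := huv
      subst this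
      exact ⟨Dp m i, mem_Dcov_Dp i, by simp [Dp], by simp [Dp]⟩
    | wA => exact ⟨EA m, mem_Dcov_EA, by simp [EA], by simp [EA]⟩
    | wB => simp [vrel] at huv
  | b i =>
    cases v with
    | x j => exact ⟨CB m, mem_Dcov_CB, by simp [CB], by simp [CB]⟩
    | a j =>
      have : i = j := huv
      subst this
      exact ⟨Dp m i, mem_Dcov_Dp i, by simp [Dp], by simp [Dp]⟩
    | b j => exact ⟨CB m, mem_Dcov_CB, by simp [CB], by simp [CB]⟩
    | wA => simp [vrel] at huv
    | wB => exact ⟨EB m, mem_Dcov_EB, by simp [EB], by simp [EB]⟩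
  | wA =>
    cases v with
    | a j => exact ⟨EA m, mem_Dcov_EA, by simp [EA], by simp [EA]⟩
    | x j => simp [vrel] at huv
    | b j => simp [vrel] at huv
    | wA => simp [vrel] at huv
    | wB => simp [vrel] at huv
  | wB =>
    cases v with
    | b j => exact ⟨EB m, mem_Dcov_EB, by simp [EB], by simp [EB]⟩
    | x j => simp [vrel] at huv
    | a j => simp [vrel] at huv
    | wA => simp [vrel] at huv
    | wB => simp [vrel] at huv

lemma mem_Tcov_EA : EA m ∈ Tcov m := by simp [Tcov]
lemma mem_Tcov_EB : EB m ∈ Tcov m := by simp [Tcov]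
lemma mem_Tcov_Mc (i : Fin m) : Mc m i ∈ Tcov m := by
  simp only [Tcov, mem_insert, mem_image, mem_univ, true_and]
  right; right; exact ⟨i, rfl⟩

lemma Tcov_cliques : ∀ C ∈ Tcov m, (Gr m).IsClique (C : Set (Vtx m)) := by
  intro C hC
  simp only [Tcov, mem_insert, mem_image, mem_univ, true_and] at hC
  obtain (rfl|rfl|⟨i, rfl⟩) := hC
  · exact isClique_EA
  · exact isClique_EB
  · exact isClique_Mc i

lemma Tcov_covers : ∀ u v : Vtx m, (Gr m).Adj u v → ∃ C ∈ Tcov m, u ∈ C ∧ v ∈ C := by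
  intro u v huv
  rw [gr_adj] at huv
  cases u with
  | x i =>
    cases v with
    | x j => exact ⟨Mc m i, mem_Tcov_Mc i, by simp [Mc], by simp [Mc]⟩
    | a j => exact ⟨Mc m j, mem_Tcov_Mc j, by simp [Mc], by simp [Mc]⟩
    | b j => exact ⟨Mc m j, mem_Tcov_Mc j, by simp [Mc], by simp [Mc]⟩
    | wA => simp [vrel] at huv
    | wB => simp [vrel] at huv
  | a i =>
    cases v with
    | x j => exact ⟨Mc m i, mem_Tcov_Mc i, by simp [Mc], by simp [Mc]⟩
    | a j => exact ⟨EA m, mem_Tcov_EA, by simp [EA], by simp [EA]⟩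
    | b j =>
      have : i = j := huv
      subst this
      exact ⟨Mc m i, mem_Tcov_Mc i, by simp [Mc], by simp [Mc]⟩
    | wA => exact ⟨EA m, mem_Tcov_EA, by simp [EA], by simp [EA]⟩
    | wB => simp [vrel] at huv
  | b i =>
    cases v with
    | x j => exact ⟨Mc m i, mem_Tcov_Mc i, by simp [Mc], by simp [Mc]⟩
    | a j =>
      have : i = j := huv
      subst this
      exact ⟨Mc m i, mem_Tcov_Mc i, by simp [Mc], by simp [Mc]⟩
    | b j => exact ⟨EB m, mem_Tcov_EB, by simp [EB], by simp [EB]⟩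
    | wA => simp [vrel] at huv
    | wB => exact ⟨EB m, mem_Tcov_EB, by simp [EB], by simp [EB]⟩
  | wA =>
    cases v with
    | a j => exact ⟨EA m, mem_Tcov_EA, by simp [EA], by simp [EA]⟩
    | x j => simp [vrel] at huv
    | b j => simp [vrel] at huv
    | wA => simp [vrel] at huv
    | wB => simp [vrel] at huv
  | wB =>
    cases v with
    | b j => exact ⟨EB m, mem_Tcov_EB, by simp [EB], by simp [EB]⟩
    | x j => simp [vrel] at huv
    | a j => simp [vrel] at huv
    | wA => simp [vrel] at huv
    | wB => simp [vrel] at huv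

end Vtx
end Part2

section Part3
namespace Vtx
variable {m : ℕ}

/-- Any clique containing `a i` and `b i` is inside `X ∪ {a i, b i}`. -/
lemma clique_ab_struct {C : Finset (Vtx m)} (hC : (Gr m).IsClique (C : Set (Vtx m)))
    {i : Fin m} (ha : a i ∈ C) (hb : b i ∈ C) :
    ∀ v ∈ C, v = a i ∨ v = b i ∨ ∃ j, v = x j := by
  intro v hv
  by_cases hva : v = a i
  · exact Or.inl hva
  by_cases hvb : v = b i
  · exact Or.inr (Or.inl hvb)
  have hadj_a : (Gr m).Adj v (a i) := hC (by exact_mod_cast hv) (by exact_mod_cast ha) hva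
  have hadj_b : (Gr m).Adj v (b i) := hC (by exact_mod_cast hv) (by exact_mod_cast hb) hvb
  rw [gr_adj] at hadj_a hadj_b
  cases v with
  | x j => exact Or.inr (Or.inr ⟨j, rfl⟩)
  | a j =>
    have : j = i := hadj_b
    subst this
    exact absurd rfl hva
  | b j =>
    have : j = i := hadj_a
    subst this
    exact absurd rfl hvb
  | wA => simp [vrel] at hadj_b
  | wB => simp [vrel] at hadj_a

/-- Any clique containing `wA` is inside `{wA} ∪ A`. -/
lemma clique_wA_struct {C : Finset (Vtx m)} (hC : (Gr m).IsClique (C : Set (Vtx m)))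
    (hw : wA ∈ C) : ∀ v ∈ C, v = wA ∨ ∃ j, v = a j := by
  intro v hv
  by_cases hvw : v = wA
  · exact Or.inl hvw
  have hadj : (Gr m).Adj v wA := hC (by exact_mod_cast hv) (by exact_mod_cast hw) hvw
  rw [gr_adj] at hadj
  cases v with
  | a j => exact Or.inr ⟨j, rfl⟩
  | x j => simp [vrel] at hadj
  | b j => simp [vrel] at hadj
  | wA => exact absurd rfl hvw
  | wB => simp [vrel] at hadj

/-- Any clique containing `wB` is inside `{wB} ∪ B`. -/
lemma clique_wB_struct {C : Finset (Vtx m)} (hC : (Gr m).IsClique (C : Set (Vtx m)))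
    (hw : wB ∈ C) : ∀ v ∈ C, v = wB ∨ ∃ j, v = b j := by
  intro v hv
  by_cases hvw : v = wB
  · exact Or.inl hvw
  have hadj : (Gr m).Adj v wB := hC (by exact_mod_cast hv) (by exact_mod_cast hw) hvw
  rw [gr_adj] at hadj
  cases v with
  | b j => exact Or.inr ⟨j, rfl⟩
  | x j => simp [vrel] at hadj
  | a j => simp [vrel] at hadj
  | wA => simp [vrel] at hadj
  | wB => exact absurd rfl hvw

lemma Mc_inj : Function.Injective (Mc m) := by
  intro i j h
  have hai : a i ∈ Mc m j := h ▸ (by simp [Mc] : a i ∈ Mc m i)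
  simp only [Mc, mem_insert, mem_XS] at hai
  obtain (h1|h1|⟨k, h1⟩) := hai
  · cases h1; rfl
  · cases h1
  · cases h1

lemma card_Tcov : (Tcov m).card = m + 2 := by
  rw [Tcov]
  rw [card_insert_of_notMem, card_insert_of_notMem, card_image_of_injective _ Mc_inj,
    card_univ, Fintype.card_fin]
  · -- EB ∉ image Mc
    simp only [mem_image, mem_univ, true_and, not_exists]
    intro i h
    have : wB ∈ Mc m i := h ▸ (by simp [EB] : wB ∈ EB m)
    simp [Mc] at this
  · -- EA ∉ insert EB (image Mc)
    simp only [mem_insert, mem_image, mem_univ, true_and, not_or, not_exists]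
    constructor
    · intro h
      have : wA ∈ EB m := h ▸ (by simp [EA] : wA ∈ EA m)
      simp only [EB, mem_insert, mem_BS] at this
      obtain (h1|⟨k, h1⟩) := this
      · cases h1
      · cases h1
    · intro i h
      have : wA ∈ Mc m i := h ▸ (by simp [EA] : wA ∈ EA m)
      simp [Mc] at this

lemma Dp_inj : Function.Injective (Dp m) := by
  intro i j h
  have hai : a i ∈ Dp m j := h ▸ (by simp [Dp] : a i ∈ Dp m i)
  simp only [Dp, mem_insert, mem_singleton] at hai
  obtain (h1|h1) := hai
  · cases h1; rfl
  · cases h1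

lemma sum_insert_le' (f : Finset (Vtx m) → ℕ) (C : Finset (Vtx m))
    (s : Finset (Finset (Vtx m))) : ∑ D ∈ insert C s, f D ≤ f C + ∑ D ∈ s, f D := by
  by_cases h : C ∈ s
  · rw [insert_eq_self.mpr h]; exact Nat.le_add_left _ _
  · rw [sum_insert h]

lemma card_CA_le : (CA m).card ≤ 2 * m := by
  calc (CA m).card ≤ (XS m).card + (AS m).card := card_union_le _ _
  _ = 2 * m := by rw [card_XS, card_AS]; ring

lemma card_CB_le : (CB m).card ≤ 2 * m := by
  calc (CB m).card ≤ (XS m).card + (BS m).card := card_union_le _ _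
  _ = 2 * m := by rw [card_XS, card_BS]; ring

lemma card_EA_le : (EA m).card ≤ m + 1 := by
  calc (EA m).card ≤ (AS m).card + 1 := card_insert_le _ _
  _ = m + 1 := by rw [card_AS]

lemma card_EB_le : (EB m).card ≤ m + 1 := by
  calc (EB m).card ≤ (BS m).card + 1 := card_insert_le _ _
  _ = m + 1 := by rw [card_BS]

lemma weight_Dcov_le : ∑ C ∈ Dcov m, C.card ≤ 8 * m + 2 := by
  have h1 : ∑ C ∈ univ.image (Dp m), C.card = ∑ i : Fin m, (Dp m i).card := by
    rw [sum_image (fun i _ j _ h => Dp_inj h)]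
  have h2 : ∑ i : Fin m, (Dp m i).card ≤ 2 * m := by
    calc ∑ i : Fin m, (Dp m i).card ≤ ∑ _i : Fin m, 2 := by
          refine sum_le_sum fun i _ => ?_
          calc (Dp m i).card ≤ ({b i} : Finset (Vtx m)).card + 1 := card_insert_le _ _
          _ = 2 := by simp
    _ = 2 * m := by simp [mul_comm]
  calc ∑ C ∈ Dcov m, C.card
      ≤ (CA m).card + ∑ C ∈ insert (CB m) (insert (EA m) (insert (EB m) (univ.image (Dp m)))), C.card :=
        sum_insert_le' _ _ _
    _ ≤ (CA m).card + ((CB m).card + ∑ C ∈ insert (EA m) (insert (EB m) (univ.image (Dp m))), C.card) :=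
        Nat.add_le_add_left (sum_insert_le' _ _ _) _
    _ ≤ (CA m).card + ((CB m).card + ((EA m).card + ∑ C ∈ insert (EB m) (univ.image (Dp m)), C.card)) := by
        refine Nat.add_le_add_left (Nat.add_le_add_left ?_ _) _
        exact sum_insert_le' _ _ _
    _ ≤ (CA m).card + ((CB m).card + ((EA m).card + ((EB m).card + ∑ C ∈ univ.image (Dp m), C.card))) := by
        refine Nat.add_le_add_left (Nat.add_le_add_left (Nat.add_le_add_left ?_ _) _) _
        exact sum_insert_le' _ _ _
    _ ≤ 2 * m + (2 * m + ((m + 1) + ((m + 1) + 2 * m))) := by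
        refine Nat.add_le_add card_CA_le (Nat.add_le_add card_CB_le (Nat.add_le_add card_EA_le
          (Nat.add_le_add card_EB_le ?_)))
        rw [h1]; exact h2
    _ = 8 * m + 2 := by ring

end Vtx
end Part3

section Part4
namespace Vtx
variable {m : ℕ}

lemma adj_ab (i : Fin m) : (Gr m).Adj (a i) (b i) := by rw [gr_adj]; simp [vrel]
lemma adj_xa (p i : Fin m) : (Gr m).Adj (x p) (a i) := by rw [gr_adj]; simp [vrel]
lemma adj_wAa (i : Fin m) : (Gr m).Adj wA (a i) := by rw [gr_adj]; simp [vrel]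
lemma adj_wBb (i : Fin m) : (Gr m).Adj wB (b i) := by rw [gr_adj]; simp [vrel]

/-- Roles inside any clique cover: for each `i` a clique containing the matching edge,
plus a clique containing `wA` and one containing `wB`. -/
lemma cover_roles [NeZero m] {𝒞 : Finset (Finset (Vtx m))}
    (hcov : ∀ u v : Vtx m, (Gr m).Adj u v → ∃ C ∈ 𝒞, u ∈ C ∧ v ∈ C) :
    ∃ (K : Fin m → Finset (Vtx m)) (LA LB : Finset (Vtx m)),
      (∀ i, K i ∈ 𝒞 ∧ a i ∈ K i ∧ b i ∈ K i) ∧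
      (LA ∈ 𝒞 ∧ wA ∈ LA) ∧ (LB ∈ 𝒞 ∧ wB ∈ LB) := by
  have i0 : Fin m := ⟨0, Nat.pos_of_ne_zero (NeZero.ne m)⟩
  have hK : ∀ i : Fin m, ∃ C, C ∈ 𝒞 ∧ a i ∈ C ∧ b i ∈ C := by
    intro i
    obtain ⟨C, hC, h1, h2⟩ := hcov (a i) (b i) (adj_ab i)
    exact ⟨C, hC, h1, h2⟩
  choose K hK1 hK2 hK3 using hK
  obtain ⟨LA, hLA, hLAw, -⟩ := hcov wA (a i0) (adj_wAa i0)
  obtain ⟨LB, hLB, hLBw, -⟩ := hcov wB (b i0) (adj_wBb i0)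
  exact ⟨K, LA, LB, fun i => ⟨hK1 i, hK2 i, hK3 i⟩, ⟨hLA, hLAw⟩, ⟨hLB, hLBw⟩⟩

/-- The `T`-family built from the roles has cardinality `m + 2` and sits inside `𝒞`. -/
lemma roles_T [NeZero m] {𝒞 : Finset (Finset (Vtx m))}
    (hcl : ∀ C ∈ 𝒞, (Gr m).IsClique (C : Set (Vtx m)))
    {K : Fin m → Finset (Vtx m)} {LA LB : Finset (Vtx m)}
    (hK : ∀ i, K i ∈ 𝒞 ∧ a i ∈ K i ∧ b i ∈ K i)
    (hLA : LA ∈ 𝒞 ∧ wA ∈ LA) (hLB : LB ∈ 𝒞 ∧ wB ∈ LB) :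
    insert LA (insert LB (univ.image K)) ⊆ 𝒞 ∧
      (insert LA (insert LB (univ.image K))).card = m + 2 := by
  have hKstruct : ∀ i, ∀ v ∈ K i, v = a i ∨ v = b i ∨ ∃ j, v = x j := fun i =>
    clique_ab_struct (hcl _ (hK i).1) (hK i).2.1 (hK i).2.2
  have hKinj : Function.Injective K := by
    intro i j h
    have hai : a i ∈ K j := h ▸ (hK i).2.1
    obtain (h1|h1|⟨k, h1⟩) := hKstruct j _ hai
    · cases h1; rfl
    · cases h1
    · cases h1
  have hLAnotK : ∀ i, LA ≠ K i := by
    intro i h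
    have : wA ∈ K i := h ▸ hLA.2
    obtain (h1|h1|⟨k, h1⟩) := hKstruct i _ this <;> cases h1
  have hLBnotK : ∀ i, LB ≠ K i := by
    intro i h
    have : wB ∈ K i := h ▸ hLB.2
    obtain (h1|h1|⟨k, h1⟩) := hKstruct i _ this <;> cases h1
  have hLALB : LA ≠ LB := by
    intro h
    have : wA ∈ LB := h ▸ hLA.2
    obtain (h1|⟨j, h1⟩) := clique_wB_struct (hcl _ hLB.1) hLB.2 _ this <;> cases h1
  constructor
  · intro C hC
    simp only [mem_insert, mem_image, mem_univ, true_and] at hC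
    obtain (rfl|rfl|⟨i, rfl⟩) := hC
    · exact hLA.1
    · exact hLB.1
    · exact (hK i).1
  · rw [card_insert_of_notMem, card_insert_of_notMem, card_image_of_injective _ hKinj,
      card_univ, Fintype.card_fin]
    · simp only [mem_image, mem_univ, true_and, not_exists]
      exact fun i h => hLBnotK i h.symm
    · simp only [mem_insert, mem_image, mem_univ, true_and, not_or, not_exists]
      exact ⟨hLALB, fun i h => hLAnotK i h.symm⟩

/-- Lower bound on the clique cover number. -/
lemma cc_lower [NeZero m] {𝒞 : Finset (Finset (Vtx m))}
    (hcl : ∀ C ∈ 𝒞, (Gr m).IsClique (C : Set (Vtx m)))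
    (hcov : ∀ u v : Vtx m, (Gr m).Adj u v → ∃ C ∈ 𝒞, u ∈ C ∧ v ∈ C) :
    m + 2 ≤ 𝒞.card := by
  obtain ⟨K, LA, LB, hK, hLA, hLB⟩ := cover_roles hcov
  obtain ⟨hsub, hcard⟩ := roles_T hcl hK hLA hLB
  calc m + 2 = (insert LA (insert LB (univ.image K))).card := hcard.symm
  _ ≤ 𝒞.card := card_le_card hsub

lemma cc_Gr [NeZero m] : cc (Gr m) = m + 2 := by
  apply le_antisymm
  · exact Nat.sInf_le ⟨Tcov m, ⟨Tcov_cliques, Tcov_covers⟩, card_Tcov⟩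
  · refine le_csInf ⟨m + 2, Tcov m, ⟨Tcov_cliques, Tcov_covers⟩, card_Tcov⟩ ?_
    rintro k ⟨𝒞, ⟨hcl, hcov⟩, rfl⟩
    exact cc_lower hcl hcov

/-- KEY: any clique cover with exactly `m + 2` cliques has total weight at least `m * m`. -/
lemma tight_cover_weight [NeZero m] {𝒞 : Finset (Finset (Vtx m))}
    (hcl : ∀ C ∈ 𝒞, (Gr m).IsClique (C : Set (Vtx m)))
    (hcov : ∀ u v : Vtx m, (Gr m).Adj u v → ∃ C ∈ 𝒞, u ∈ C ∧ v ∈ C)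
    (hcard : 𝒞.card = m + 2) :
    m * m ≤ ∑ C ∈ 𝒞, C.card := by
  obtain ⟨K, LA, LB, hK, hLA, hLB⟩ := cover_roles hcov
  obtain ⟨hsub, hTcard⟩ := roles_T hcl hK hLA hLB
  have hTeq : insert LA (insert LB (univ.image K)) = 𝒞 :=
    eq_of_subset_of_card_le hsub (by rw [hcard, hTcard])
  have hKstruct : ∀ i, ∀ v ∈ K i, v = a i ∨ v = b i ∨ ∃ j, v = x j := fun i =>
    clique_ab_struct (hcl _ (hK i).1) (hK i).2.1 (hK i).2.2
  -- every core vertex lies in every K i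
  have hXK : ∀ p i : Fin m, x p ∈ K i := by
    intro p i
    obtain ⟨C, hC, hxp, hai⟩ := hcov (x p) (a i) (adj_xa p i)
    have hCT : C ∈ insert LA (insert LB (univ.image K)) := hTeq ▸ hC
    simp only [mem_insert, mem_image, mem_univ, true_and] at hCT
    obtain (rfl|rfl|⟨j, rfl⟩) := hCT
    · obtain (h1|⟨k, h1⟩) := clique_wA_struct (hcl _ hLA.1) hLA.2 _ hxp <;> cases h1
    · obtain (h1|⟨k, h1⟩) := clique_wB_struct (hcl _ hLB.1) hLB.2 _ hxp <;> cases h1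
    · obtain (h1|h1|⟨k, h1⟩) := hKstruct j _ hai
      · cases h1; exact hxp
      · cases h1
      · cases h1
  have hcardK : ∀ i, m ≤ (K i).card := by
    intro i
    have hXsub : XS m ⊆ K i := by
      intro v hv
      obtain ⟨p, rfl⟩ := mem_XS.mp hv
      exact hXK p i
    calc m = (XS m).card := card_XS.symm
    _ ≤ (K i).card := card_le_card hXsub
  have hKinj : Function.Injective K := by
    intro i j h
    have hai : a i ∈ K j := h ▸ (hK i).2.1
    obtain (h1|h1|⟨k, h1⟩) := hKstruct j _ hai
    · cases h1; rfl
    · cases h1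
    · cases h1
  have himsub : univ.image K ⊆ 𝒞 := by
    intro C hC
    simp only [mem_image, mem_univ, true_and] at hC
    obtain ⟨i, rfl⟩ := hC
    exact (hK i).1
  calc m * m = ∑ _i : Fin m, m := by simp [mul_comm]
  _ ≤ ∑ i : Fin m, (K i).card := sum_le_sum fun i _ => hcardK i
  _ = ∑ C ∈ univ.image K, C.card := (sum_image fun i _ j _ h => hKinj h).symm
  _ ≤ ∑ C ∈ 𝒞, C.card := sum_le_sum_of_subset himsub

end Vtx
end Part4

section Part5
namespace Vtx
variable {m : ℕ}

lemma Dcov_isCover : IsCliqueCover (Gr m) (Dcov m) := ⟨Dcov_cliques, Dcov_covers⟩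
lemma Tcov_isCover : IsCliqueCover (Gr m) (Tcov m) := ⟨Tcov_cliques, Tcov_covers⟩

lemma scc_le_Gr : scc (Gr m) ≤ 8 * m + 2 := by
  have h : (∑ C ∈ Dcov m, C.card) ∈ {k | ∃ 𝒞, IsCliqueCover (Gr m) 𝒞 ∧ ∑ C ∈ 𝒞, C.card = k} :=
    ⟨Dcov m, Dcov_isCover, rfl⟩
  exact le_trans (Nat.sInf_le h) weight_Dcov_le

lemma scc_pos_Gr [NeZero m] : 1 ≤ scc (Gr m) := by
  refine le_csInf ⟨∑ C ∈ Dcov m, C.card, Dcov m, Dcov_isCover, rfl⟩ ?_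
  rintro k ⟨𝒞, ⟨hcl, hcov⟩, rfl⟩
  have i0 : Fin m := ⟨0, Nat.pos_of_ne_zero (NeZero.ne m)⟩
  obtain ⟨C, hC, hwC, -⟩ := hcov wA (a i0) (adj_wAa i0)
  calc 1 ≤ C.card := Nat.one_le_iff_ne_zero.mpr (by
        intro h
        rw [Finset.card_eq_zero] at h
        subst h
        exact absurd hwC (Finset.notMem_empty _))
  _ ≤ ∑ C ∈ 𝒞, C.card := single_le_sum (fun i _ => Nat.zero_le _) hC

lemma scc'_ge_Gr [NeZero m] : m * m ≤ scc' (Gr m) := by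
  refine le_csInf ⟨∑ C ∈ Tcov m, C.card, Tcov m, Tcov_isCover, by rw [cc_Gr]; exact card_Tcov, rfl⟩ ?_
  rintro k ⟨𝒞, ⟨hcl, hcov⟩, hcard, rfl⟩
  rw [cc_Gr] at hcard
  exact tight_cover_weight hcl hcov hcard

end Vtx
end Part5


/-- There is a sequence of finite simple graphs `Gₙ` with `scc'(Gₙ)/scc(Gₙ) → ∞`. -/
theorem stmt_0 :
    ∃ (W : ℕ → Type) (_ : ∀ n, Fintype (W n)) (G : ∀ n, SimpleGraph (W n)),
      Filter.Tendsto (fun n => (scc' (G n) : ℝ) / (scc (G n) : ℝ))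
        Filter.atTop Filter.atTop := by
  refine ⟨fun n => Vtx (n + 1), fun n => inferInstance, fun n => Vtx.Gr (n + 1), ?_⟩
  have hcomp : Filter.Tendsto (fun n : ℕ => ((n : ℝ) + 1) / 9) Filter.atTop Filter.atTop := by
    refine Filter.Tendsto.atTop_div_const (by norm_num) ?_
    exact Filter.tendsto_atTop_add_const_right _ 1 tendsto_natCast_atTop_atTop
  refine Filter.tendsto_atTop_mono' _ ?_ hcomp
  rw [Filter.EventuallyLE, Filter.eventually_atTop]
  refine ⟨1, fun n hn => ?_⟩
  set m : ℕ := n + 1 with hm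
  have hA : (m * m : ℕ) ≤ scc' (Vtx.Gr m) := Vtx.scc'_ge_Gr
  have hB : scc (Vtx.Gr m) ≤ 8 * m + 2 := Vtx.scc_le_Gr
  have hC : 1 ≤ scc (Vtx.Gr m) := Vtx.scc_pos_Gr
  have h0 : (0 : ℝ) < (scc (Vtx.Gr m) : ℝ) := by exact_mod_cast hC
  have hm2 : 2 ≤ m := by omega
  have step1 : ((n : ℝ) + 1) / 9 ≤ ((m : ℝ) * m) / (8 * m + 2) := by
    rw [div_le_div_iff₀ (by norm_num) (by positivity)]
    have : ((n : ℝ) + 1) = (m : ℝ) := by push_cast [hm]; ring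
    rw [this]
    have hm2' : (2 : ℝ) ≤ (m : ℝ) := by exact_mod_cast hm2
    nlinarith [hm2']
  have step2 : ((m : ℝ) * m) / (8 * m + 2) ≤ (scc' (Vtx.Gr m) : ℝ) / (scc (Vtx.Gr m) : ℝ) := by
    apply div_le_div₀ (by positivity) ?_ h0 ?_
    · exact_mod_cast hA
    · exact_mod_cast hB
  exact le_trans step1 step2
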